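/- Let 0 < q < 1, p > 1, α > 0, and set E = (∑_{n=0}^∞ q^{n/p'} (q^{n+1}; q)_{α-1})^p with 1/p + 1/p' = 1. For every sequence (a_n)_{n∈ℤ} of nonnegative reals, ∑_{n∈ℤ} (q^{-n/p'} ∑_{k=n}^∞ (q^{k-n+1}; q)_{α-1} q^{k/p'} a_k)^p ≤ E ∑_{n∈ℤ} a_n^p. -/

import Mathlib

open scoped ENNReal

/-- The infinite q-Pochhammer symbol `(a; q)_∞ = ∏_{i≥0} (1 - a qⁱ)`. -/
noncomputable def qPochInf (a q : ℝ) : ℝ := ∏' i : ℕ, (1 - a * q ^ i)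

/-- The q-Pochhammer symbol `(a; q)_β = (a;q)_∞ / (a q^β; q)_∞`. -/
noncomputable def qPoch (a q β : ℝ) : ℝ := qPochInf a q / qPochInf (a * q ^ β) q

lemma prod_one_sub_ge (s : Finset ℕ) (u : ℕ → ℝ) (h0 : ∀ i, 0 ≤ u i) (h1 : ∀ i, u i ≤ 1) :
    1 - ∑ i ∈ s, u i ≤ ∏ i ∈ s, (1 - u i) := by
  induction s using Finset.cons_induction with
  | empty => simp
  | cons j s hj ih =>
    rw [Finset.prod_cons, Finset.sum_cons]
    have hS : 0 ≤ ∑ i ∈ s, u i := Finset.sum_nonneg fun i _ => h0 i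
    have hP : 0 ≤ ∏ i ∈ s, (1 - u i) := Finset.prod_nonneg fun i _ => by linarith [h1 i]
    nlinarith [h0 j, h1 j, mul_nonneg (by linarith [h1 j] : (0:ℝ) ≤ 1 - u j)
      (by linarith : (0:ℝ) ≤ ∏ i ∈ s, (1 - u i) - (1 - ∑ i ∈ s, u i))]

lemma qPochInf_factor_nonneg {x q : ℝ} (hx0 : 0 ≤ x) (hx1 : x ≤ 1) (hq0 : 0 ≤ q) (hq1 : q ≤ 1)
    (i : ℕ) : 0 ≤ 1 - x * q ^ i := by
  nlinarith [pow_nonneg hq0 i, pow_le_one₀ hq0 hq1 (n := i)]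

lemma qPochInf_nonneg {x q : ℝ} (hx0 : 0 ≤ x) (hx1 : x ≤ 1) (hq0 : 0 ≤ q) (hq1 : q ≤ 1) :
    0 ≤ qPochInf x q := by
  unfold qPochInf
  by_cases h : Multipliable fun i : ℕ => 1 - x * q ^ i
  · exact ge_of_tendsto' h.hasProd fun s =>
      Finset.prod_nonneg fun i _ => qPochInf_factor_nonneg hx0 hx1 hq0 hq1 i
  · rw [tprod_eq_one_of_not_multipliable h]; norm_num

lemma qPochInf_le_one {x q : ℝ} (hx0 : 0 ≤ x) (hx1 : x ≤ 1) (hq0 : 0 ≤ q) (hq1 : q ≤ 1) :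
    qPochInf x q ≤ 1 := by
  unfold qPochInf
  by_cases h : Multipliable fun i : ℕ => 1 - x * q ^ i
  · refine le_of_tendsto' h.hasProd fun s => Finset.prod_le_one
      (fun i _ => qPochInf_factor_nonneg hx0 hx1 hq0 hq1 i) fun i _ => ?_
    nlinarith [mul_nonneg hx0 (pow_nonneg hq0 i)]
  · rw [tprod_eq_one_of_not_multipliable h]

lemma le_qPochInf {x q : ℝ} (hx0 : 0 ≤ x) (hx1 : x ≤ 1) (hq0 : 0 ≤ q) (hq1 : q < 1) :
    1 - x / (1 - q) ≤ qPochInf x q := by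
  unfold qPochInf
  by_cases h : Multipliable fun i : ℕ => 1 - x * q ^ i
  · refine ge_of_tendsto' h.hasProd fun s => ?_
    have hsum : Summable fun i : ℕ => x * q ^ i :=
      (summable_geometric_of_lt_one hq0 hq1).mul_left x
    have hle : ∑ i ∈ s, x * q ^ i ≤ x / (1 - q) := by
      calc ∑ i ∈ s, x * q ^ i ≤ ∑' i : ℕ, x * q ^ i :=
            Summable.sum_le_tsum s (fun i _ => mul_nonneg hx0 (pow_nonneg hq0 i)) hsum
        _ = x * (1 - q)⁻¹ := by rw [tsum_mul_left, tsum_geometric_of_lt_one hq0 hq1]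
        _ = x / (1 - q) := (div_eq_mul_inv x _).symm
    have := prod_one_sub_ge s (fun i => x * q ^ i)
      (fun i => mul_nonneg hx0 (pow_nonneg hq0 i))
      (fun i => by show x * q ^ i ≤ 1; nlinarith [pow_nonneg hq0 i, pow_le_one₀ hq0 hq1.le (n := i)])
    linarith
  · rw [tprod_eq_one_of_not_multipliable h]
    have : 0 ≤ x / (1 - q) := div_nonneg hx0 (by linarith)
    linarith

open MeasureTheory in
lemma tsum_mul_rpow_le {p p' : ℝ} (hp : 1 < p) (hp'' : 1 / p + 1 / p' = 1)
    (b x : ℕ → ℝ≥0∞) :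
    (∑' m, b m * x m) ^ p ≤ (∑' m, b m) ^ (p - 1) * ∑' m, b m * x m ^ p := by
  have hp0 : 0 < p := by linarith
  have hpq : p.HolderConjugate p' := Real.holderConjugate_iff.mpr ⟨hp, by simpa [one_div] using hp''⟩
  have hp'0 : 0 < p' := hpq.symm.left_pos
  have e1 : ∀ m, b m ^ (1/p) * x m * b m ^ (1/p') = b m * x m := by
    intro m
    rw [mul_right_comm, ← ENNReal.rpow_add_of_nonneg _ _ (by positivity) (by positivity),
      hp'', ENNReal.rpow_one]
  have e2 : ∀ m, (b m ^ (1/p) * x m) ^ p = b m * x m ^ p := by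
    intro m
    rw [ENNReal.mul_rpow_of_nonneg _ _ hp0.le, ← ENNReal.rpow_mul, one_div,
      inv_mul_cancel₀ hp0.ne', ENNReal.rpow_one]
  have e3 : ∀ m, (b m ^ (1/p')) ^ p' = b m := by
    intro m
    rw [← ENNReal.rpow_mul, one_div, inv_mul_cancel₀ hp'0.ne', ENNReal.rpow_one]
  have H := ENNReal.lintegral_mul_le_Lp_mul_Lq (Measure.count : Measure ℕ) hpq
    (f := fun m => b m ^ (1/p) * x m) (g := fun m => b m ^ (1/p'))
    (measurable_of_countable _).aemeasurable (measurable_of_countable _).aemeasurable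
  simp only [Pi.mul_apply, lintegral_count, e1, e2, e3] at H
  have hE : (1/p') * p = p - 1 := by
    have h1 : 1/p' = 1 - 1/p := by linarith
    rw [h1, sub_mul, one_mul, one_div, inv_mul_cancel₀ hp0.ne']
  calc (∑' m, b m * x m) ^ p
      ≤ ((∑' m, b m * x m ^ p) ^ (1/p) * (∑' m, b m) ^ (1/p')) ^ p :=
        ENNReal.rpow_le_rpow H hp0.le
    _ = (∑' m, b m * x m ^ p) * (∑' m, b m) ^ (p - 1) := by
        rw [ENNReal.mul_rpow_of_nonneg _ _ hp0.le, ← ENNReal.rpow_mul, ← ENNReal.rpow_mul,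
          hE, one_div, inv_mul_cancel₀ hp0.ne', ENNReal.rpow_one]
    _ = (∑' m, b m) ^ (p - 1) * ∑' m, b m * x m ^ p := mul_comm _ _

theorem matrix_inequality_Z (q p p' α : ℝ) (hq : 0 < q) (hq1 : q < 1) (hp : 1 < p)
    (hα : 0 < α) (hp' : 1 / p + 1 / p' = 1) (a : ℤ → ℝ≥0∞) :
    ∑' n : ℤ, ((ENNReal.ofReal q) ^ (-(n : ℝ) / p') *
        ∑' m : ℕ, ENNReal.ofReal (qPoch (q ^ ((m : ℝ) + 1)) q (α - 1)) *
          (ENNReal.ofReal q) ^ (((n : ℝ) + (m : ℝ)) / p') * a (n + m)) ^ p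
      ≤ ENNReal.ofReal
          ((∑' n : ℕ, q ^ ((n : ℝ) / p') * qPoch (q ^ ((n : ℝ) + 1)) q (α - 1)) ^ p) *
        ∑' n : ℤ, (a n) ^ p := by
  have hp0 : 0 < p := by linarith
  have hq0 : (0:ℝ) ≤ q := hq.le
  have hp'0 : 0 < 1/p' := by
    have h2 : (1:ℝ)/p < 1 := (div_lt_one hp0).mpr hp
    linarith
  -- basic bounds on the arguments of qPochInf
  have harg : ∀ m : ℕ, q ^ ((m:ℝ)+1) * q ^ (α-1) = q ^ ((m:ℝ)+α) := by
    intro m; rw [← Real.rpow_add hq]; congr 1; ring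
  have hx0 : ∀ m : ℕ, (0:ℝ) < q ^ ((m:ℝ)+1) := fun m => Real.rpow_pos_of_pos hq _
  have hx1 : ∀ m : ℕ, q ^ ((m:ℝ)+1) ≤ 1 := fun m =>
    Real.rpow_le_one hq0 hq1.le (by positivity)
  have hy0 : ∀ m : ℕ, (0:ℝ) < q ^ ((m:ℝ)+α) := fun m => Real.rpow_pos_of_pos hq _
  have hy1 : ∀ m : ℕ, q ^ ((m:ℝ)+α) ≤ 1 := fun m =>
    Real.rpow_le_one hq0 hq1.le (by positivity)
  have hP0 : ∀ m : ℕ, 0 ≤ qPoch (q ^ ((m:ℝ)+1)) q (α-1) := by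
    intro m
    unfold qPoch
    rw [harg m]
    exact div_nonneg (qPochInf_nonneg (hx0 m).le (hx1 m) hq0 hq1.le)
      (qPochInf_nonneg (hy0 m).le (hy1 m) hq0 hq1.le)
  have hP2 : ∀ m : ℕ, q ^ ((m:ℝ)+α) ≤ (1-q)/2 → qPoch (q ^ ((m:ℝ)+1)) q (α-1) ≤ 2 := by
    intro m hm
    unfold qPoch
    rw [harg m]
    have hB : (1:ℝ)/2 ≤ qPochInf (q ^ ((m:ℝ)+α)) q := by
      have h1 := le_qPochInf (hy0 m).le (hy1 m) hq0 hq1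
      have hd : q ^ ((m:ℝ)+α) / (1-q) ≤ 1/2 := by
        rw [div_le_iff₀ (by linarith : (0:ℝ) < 1 - q)]; linarith
      linarith
    have hA : qPochInf (q ^ ((m:ℝ)+1)) q ≤ 1 :=
      qPochInf_le_one (hx0 m).le (hx1 m) hq0 hq1.le
    rw [div_le_iff₀ (by linarith : (0:ℝ) < qPochInf (q ^ ((m:ℝ)+α)) q)]
    linarith
  -- the real sequence and its summability
  set g : ℕ → ℝ := fun m => q ^ ((m:ℝ)/p') * qPoch (q ^ ((m:ℝ)+1)) q (α-1) with hg
  have hg0 : ∀ m, 0 ≤ g m := fun m =>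
    mul_nonneg (Real.rpow_nonneg hq0 _) (hP0 m)
  set r : ℝ := q ^ (1/p') with hr
  have hr0 : 0 ≤ r := Real.rpow_nonneg hq0 _
  have hr1 : r < 1 := Real.rpow_lt_one hq0 hq1 hp'0
  have hgr : ∀ m : ℕ, q ^ ((m:ℝ)/p') = r ^ m := by
    intro m
    rw [show ((m:ℝ))/p' = (1/p') * (m:ℝ) by ring, Real.rpow_mul hq0, Real.rpow_natCast, hr]
  obtain ⟨M, hM⟩ := exists_pow_lt_of_lt_one (show (0:ℝ) < (1-q)/2 by linarith) hq1
  have htail : ∀ m : ℕ, M ≤ m → q ^ ((m:ℝ)+α) ≤ (1-q)/2 := by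
    intro m hm
    have hcast : (M:ℝ) ≤ (m:ℝ) := Nat.cast_le.mpr hm
    have h1 : q ^ ((m:ℝ)+α) ≤ q ^ ((M:ℝ)) :=
      Real.rpow_le_rpow_of_exponent_ge hq hq1.le (by linarith)
    rw [Real.rpow_natCast] at h1
    linarith
  have hSum : Summable g := by
    rw [← summable_nat_add_iff M]
    refine Summable.of_nonneg_of_le (fun m => hg0 _) (fun m => ?_)
      (((summable_geometric_of_lt_one hr0 hr1).mul_right (r ^ M)).mul_left 2)
    have h2 : qPoch (q ^ (((m+M:ℕ):ℝ)+1)) q (α-1) ≤ 2 :=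
      hP2 (m+M) (htail (m+M) (Nat.le_add_left M m))
    have h1 : q ^ (((m+M:ℕ):ℝ)/p') = r ^ (m+M) := hgr (m+M)
    simp only [hg]
    rw [h1, pow_add]
    have h3 : r ^ m * r ^ M * qPoch (q ^ (((m+M:ℕ):ℝ)+1)) q (α-1) ≤ r ^ m * r ^ M * 2 :=
      mul_le_mul_of_nonneg_left h2 (by positivity)
    linarith
  have hofReal : ENNReal.ofReal (∑' m, g m) = ∑' m, ENNReal.ofReal (g m) :=
    ENNReal.ofReal_tsum_of_nonneg hg0 hSum
  set B : ℝ≥0∞ := ∑' m, ENNReal.ofReal (g m) with hBdef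
  have hBne : B ≠ ⊤ := by rw [← hofReal]; exact ENNReal.ofReal_ne_top
  -- rewriting the left-hand side
  have hQ0 : (ENNReal.ofReal q) ≠ 0 := by
    simp only [ne_eq, ENNReal.ofReal_eq_zero, not_le]; exact hq
  have hQt : (ENNReal.ofReal q) ≠ ⊤ := ENNReal.ofReal_ne_top
  have hLHS : ∀ n : ℤ, (ENNReal.ofReal q) ^ (-(n:ℝ)/p') *
      ∑' m : ℕ, ENNReal.ofReal (qPoch (q ^ ((m:ℝ)+1)) q (α-1)) *
        (ENNReal.ofReal q) ^ (((n:ℝ)+(m:ℝ))/p') * a (n + m)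
      = ∑' m : ℕ, ENNReal.ofReal (g m) * a (n + m) := by
    intro n
    rw [← ENNReal.tsum_mul_left]
    refine tsum_congr fun m => ?_
    have h1 : (ENNReal.ofReal q) ^ (-(n:ℝ)/p') * (ENNReal.ofReal q) ^ (((n:ℝ)+(m:ℝ))/p')
        = (ENNReal.ofReal q) ^ ((m:ℝ)/p') := by
      rw [← ENNReal.rpow_add _ _ hQ0 hQt]; congr 1; ring
    have h2 : ENNReal.ofReal (g m)
        = (ENNReal.ofReal q) ^ ((m:ℝ)/p') * ENNReal.ofReal (qPoch (q ^ ((m:ℝ)+1)) q (α-1)) := by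
      simp only [hg]
      rw [ENNReal.ofReal_mul (by positivity), ← ENNReal.ofReal_rpow_of_pos hq]
    rw [h2, ← h1]; ring
  -- final constant comparison
  have hSnn : 0 ≤ ∑' m, g m := tsum_nonneg hg0
  have hBp : B ^ (p-1) * B ≤ ENNReal.ofReal ((∑' m, g m) ^ p) := by
    rw [← ENNReal.ofReal_rpow_of_nonneg hSnn hp0.le, hofReal]
    by_cases hB : B = 0
    · rw [hB, ENNReal.zero_rpow_of_pos (by linarith : (0:ℝ) < p - 1), zero_mul]
      exact zero_le
    · calc B ^ (p-1) * B = B ^ ((p-1)+1) := by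
            rw [ENNReal.rpow_add _ _ hB hBne, ENNReal.rpow_one]
        _ = B ^ p := by norm_num
        _ ≤ B ^ p := le_rfl
  calc ∑' n : ℤ, ((ENNReal.ofReal q) ^ (-(n : ℝ) / p') *
        ∑' m : ℕ, ENNReal.ofReal (qPoch (q ^ ((m : ℝ) + 1)) q (α - 1)) *
          (ENNReal.ofReal q) ^ (((n : ℝ) + (m : ℝ)) / p') * a (n + m)) ^ p
      = ∑' n : ℤ, (∑' m : ℕ, ENNReal.ofReal (g m) * a (n + m)) ^ p := by
        refine tsum_congr fun n => ?_; rw [hLHS n]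
    _ ≤ ∑' n : ℤ, B ^ (p-1) * ∑' m : ℕ, ENNReal.ofReal (g m) * a (n + m) ^ p :=
        ENNReal.tsum_le_tsum fun n =>
          tsum_mul_rpow_le hp hp' (fun m => ENNReal.ofReal (g m)) (fun m => a (n + m))
    _ = B ^ (p-1) * ∑' m : ℕ, ENNReal.ofReal (g m) * ∑' n : ℤ, a (n + m) ^ p := by
        rw [ENNReal.tsum_mul_left]
        congr 1
        rw [ENNReal.tsum_comm]
        exact tsum_congr fun m => ENNReal.tsum_mul_left
    _ = B ^ (p-1) * (B * ∑' n : ℤ, a n ^ p) := by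
        congr 1
        have htr : ∀ m : ℕ, ∑' n : ℤ, a (n + m) ^ p = ∑' n : ℤ, a n ^ p := fun m =>
          (Equiv.addRight (m:ℤ)).tsum_eq (fun k => a k ^ p)
        calc ∑' m : ℕ, ENNReal.ofReal (g m) * ∑' n : ℤ, a (n + m) ^ p
            = ∑' m : ℕ, ENNReal.ofReal (g m) * ∑' n : ℤ, a n ^ p :=
              tsum_congr fun m => by rw [htr m]
          _ = B * ∑' n : ℤ, a n ^ p := ENNReal.tsum_mul_right
    _ ≤ ENNReal.ofReal ((∑' m, g m) ^ p) * ∑' n : ℤ, a n ^ p := by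
        rw [← mul_assoc]
        exact mul_le_mul_left hBp _
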